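/- Let γ, λ ∈ (0,1) and let (δ_k)_{k≥0} be a bounded sequence of real numbers (TD errors). Define the n-step advantage Â⁽ⁿ⁾ = Σ_{k=0}^{n−1} γᵏ δ_k. Then the exponentially weighted average (1−λ) Σ_{n=1}^{∞} λ^{n−1} Â⁽ⁿ⁾ converges and equals Σ_{k=0}^{∞} (γλ)ᵏ δ_k. -/

import Mathlib

theorem gae_exponential_average (γ lam : ℝ) (hγ : γ ∈ Set.Ioo (0 : ℝ) 1)
    (hlam : lam ∈ Set.Ioo (0 : ℝ) 1) (δ : ℕ → ℝ) (M : ℝ) (hb : ∀ k, |δ k| ≤ M) :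
    Summable (fun k : ℕ => (γ * lam) ^ k * δ k) ∧
    HasSum
      (fun n : ℕ => (1 - lam) * lam ^ n * ∑ k ∈ Finset.range (n + 1), γ ^ k * δ k)
      (∑' k : ℕ, (γ * lam) ^ k * δ k) := by
  obtain ⟨hγ0, hγ1⟩ := hγ
  obtain ⟨hl0, hl1⟩ := hlam
  have hγl : |γ * lam| < 1 := by
    rw [abs_of_pos (by positivity)]
    nlinarith
  have hl : |lam| < 1 := by rw [abs_of_pos hl0]; exact hl1
  have hgeo : Summable (fun k : ℕ => |γ * lam| ^ k * M) :=
    (summable_geometric_of_lt_one (abs_nonneg _) hγl).mul_right M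
  have hfn : Summable (fun k : ℕ => ‖(γ * lam) ^ k * δ k‖) := by
    refine hgeo.of_nonneg_of_le (fun k => norm_nonneg _) (fun k => ?_)
    rw [Real.norm_eq_abs, abs_mul, abs_pow]
    exact mul_le_mul_of_nonneg_left (hb k) (by positivity)
  have hgn : Summable (fun j : ℕ => ‖(1 - lam) * lam ^ j‖) := by
    simp_rw [norm_mul, norm_pow]
    exact ((summable_geometric_of_lt_one (abs_nonneg _) hl)).mul_left _
  refine ⟨hfn.of_norm, ?_⟩
  have key := hasSum_sum_range_mul_of_summable_norm (R := ℝ) hfn hgn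
  have hsumg : ∑' j : ℕ, (1 - lam) * lam ^ j = 1 := by
    rw [tsum_mul_left, tsum_geometric_of_lt_one hl0.le hl1]
    exact div_self (by linarith)
  rw [hsumg, mul_one] at key
  convert key using 2 with n
  · rfl
  rw [Finset.mul_sum]
  apply Finset.sum_congr rfl
  intro k hk
  have hkn : k ≤ n := Nat.lt_succ_iff.mp (Finset.mem_range.mp hk)
  have : lam ^ n = lam ^ k * lam ^ (n - k) := by
    rw [← pow_add, Nat.add_sub_cancel' hkn]
  rw [this, mul_pow]
  ring
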